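/- Let u be a finite Lyndon word, and let xa be a prefix of u where x is a word and a is a letter. If b is a letter with a < b, then xb is a Lyndon word and u <lex xb. -/
import Mathlib

/-- A finite word is a Lyndon word if it is nonempty and lexicographically
strictly smaller than all of its proper nonempty suffixes. -/
def IsLyndon {A : Type*} [LinearOrder A] (w : List A) : Prop :=
  w ≠ [] ∧ ∀ i : ℕ, 0 < i → i < w.length → w < w.drop i

private lemma lex_lt_of_lists {A : Type*} [LinearOrder A] (l l' : List A) :
    l < l' ↔ List.Lex (· < ·) l l' := Iff.rfl

private lemma lex_append_lt {A : Type*} [LinearOrder A] (s t t' : List A) {a b : A}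
    (hab : a < b) : List.Lex (· < ·) (s ++ a :: t) (s ++ b :: t') := by
  induction s with
  | nil => exact List.Lex.rel hab
  | cons c s ih => exact List.Lex.cons ih

private lemma lex_core {A : Type*} [LinearOrder A] {a b : A} (hab : a < b) (t : List A) :
    ∀ (s' s : List A), s'.length ≤ s.length →
      List.Lex (· < ·) (s ++ a :: t) (s' ++ a :: t) →
      List.Lex (· < ·) (s ++ [b]) (s' ++ [b]) := by
  intro s'
  induction s' with
  | nil =>
    intro s _ h
    cases s with
    | nil => exact absurd h (by exact irrefl _)
    | cons c s₂ =>
      simp only [List.cons_append, List.nil_append] at h ⊢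
      cases h with
      | rel hca => exact List.Lex.rel (hca.trans hab)
      | cons h' => exact List.Lex.rel hab
  | cons c' s₂' ih =>
    intro s hlen h
    cases s with
    | nil => simp at hlen
    | cons c s₂ =>
      simp only [List.cons_append, List.length_cons] at h hlen ⊢
      cases h with
      | rel hcc => exact List.Lex.rel hcc
      | cons h' => exact List.Lex.cons (ih s₂ (by omega) h')

theorem lyndon_prefix_increase_letter {A : Type*} [LinearOrder A]
    (u x : List A) (a b : A)
    (hu : IsLyndon u) (hpre : (x ++ [a]) <+: u) (hab : a < b) :
    IsLyndon (x ++ [b]) ∧ u < x ++ [b] := by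
  obtain ⟨t, ht⟩ := hpre
  have hu2 : u = x ++ a :: t := by simpa using ht.symm
  constructor
  · constructor
    · simp
    · intro i hi hilen
      have hix : i ≤ x.length := by
        simpa using Nat.lt_succ_iff.mp (by simpa using hilen)
      have hdrop : (x ++ [b]).drop i = x.drop i ++ [b] := by
        rw [List.drop_append]
        have : i - x.length = 0 := by omega
        simp [this]
      rw [hdrop]
      have hiu : i < u.length := by
        rw [hu2]; simp; omega
      have := hu.2 i hi hiu
      rw [hu2] at this
      have hdrop2 : (x ++ a :: t).drop i = x.drop i ++ a :: t := by
        rw [List.drop_append]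
        have : i - x.length = 0 := by omega
        simp [this]
      rw [hdrop2] at this
      rw [lex_lt_of_lists] at this ⊢
      exact lex_core hab t (x.drop i) x (by simp) this
  · rw [hu2, lex_lt_of_lists]
    have : (x ++ [b] : List A) = x ++ b :: [] := rfl
    rw [this]
    exact lex_append_lt x t [] hab
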